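/- arXiv:2105.03064 — 6 statements merged into one kernel-verified Lean document; each statement's English description precedes it below -/
import Mathlib

section
/- For all Ω ⊆ [n] and S ⊆ [n], f(Ω,S) ≥ max_{i ∈ Ω^c ∩ S^c} ℓ_{i,s} + max_{j ∈ Ω ∩ S} ℓ_{d,j}, where a maximum over the empty set is taken to be 0; moreover equality holds whenever Ω^c ∩ S^c = ∅ or Ω ∩ S = ∅. -/
open Finset

/-- The η×η shift-type block `D^{η−m}` over GF(2): entry (i,j) is 1 iff
`j < m` and `i = j + (η − m)`. -/
def Dblk (η m : ℕ) : Matrix (Fin η) (Fin η) (ZMod 2) :=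
  Matrix.of fun i j => if (j : ℕ) < m ∧ (i : ℕ) = (j : ℕ) + (η - m) then 1 else 0

/-- Row-block index set of the transfer matrix: `{d} ∪ (Ωᶜ ∩ Sᶜ)`, with `0`
playing the role of the destination `d` and relays being `1,…,n`. -/
def rowIdx (n : ℕ) (Ω S : Finset ℕ) : Finset ℕ :=
  insert 0 ((Finset.Icc 1 n \ Ω) \ S)

/-- Column-block index set of the transfer matrix: `{s} ∪ (Ω ∩ S)`, with `0`
playing the role of the source `s`. -/
def colIdx (Ω S : Finset ℕ) : Finset ℕ :=
  insert 0 (Ω ∩ S)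

/-- `f(Ω,S)`: rank over GF(2) of the transfer matrix `F_{Ω,S}`, whose block in
row block `i` and column block `j` is `D^{η−ℓ i j}` (here `ℓ i j` encodes
`ℓ_{i,j}`, with index `0` standing for `d` in the first slot and for `s` in the
second slot). -/
noncomputable def fRank (n η : ℕ) (ℓ : ℕ → ℕ → ℕ) (Ω S : Finset ℕ) : ℕ :=
  Matrix.rank
    (Matrix.of fun (p : ↥(rowIdx n Ω S) × Fin η) (q : ↥(colIdx Ω S) × Fin η) =>
      Dblk η (ℓ (p.1 : ℕ) (q.1 : ℕ)) p.2 q.2)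

/-- The `(n+2) × (n+2)` real matrix `P`. -/
noncomputable def Pmat (n η : ℕ) (ℓ : ℕ → ℕ → ℕ) : Matrix (Fin (n+2)) (Fin (n+2)) ℝ :=
  Matrix.of fun i j =>
    if (i : ℕ) = 0 then (if (j : ℕ) = 0 then 0 else 1)
    else if (j : ℕ) = 0 then 1
    else -(fRank n η ℓ (Finset.Icc (i : ℕ) n)
        (if (j : ℕ) = n + 1 then (∅ : Finset ℕ) else {(j : ℕ)}) : ℝ)

/-- `P̃_i`: determinant of the submatrix of `P` obtained by deleting row `0`
and column `i`. -/
noncomputable def Pminor (n η : ℕ) (ℓ : ℕ → ℕ → ℕ) (i : Fin (n+2)) : ℝ :=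
  ((Pmat n η ℓ).submatrix Fin.succ i.succAbove).det

/-- Feasibility for the LP defining the approximate capacity `C^LD`. -/
def FeasLD (n η : ℕ) (ℓ : ℕ → ℕ → ℕ) (t : ℝ) (lam : Finset ℕ → ℝ) : Prop :=
  (∀ S ⊆ Finset.Icc 1 n, 0 ≤ lam S) ∧
  (∑ S ∈ (Finset.Icc 1 n).powerset, lam S) ≤ 1 ∧
  ∀ Ω ⊆ Finset.Icc 1 n,
    t ≤ ∑ S ∈ (Finset.Icc 1 n).powerset, lam S * (fRank n η ℓ Ω S : ℝ)

/-- The approximate capacity `C^LD`. -/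
noncomputable def CLD (n η : ℕ) (ℓ : ℕ → ℕ → ℕ) : ℝ :=
  sSup {t : ℝ | ∃ lam, FeasLD n η ℓ t lam}

/-- Feasibility for the relaxed LP defining `C^U`. -/
def FeasU (n η : ℕ) (ℓ : ℕ → ℕ → ℕ) (t : ℝ) (lam : Finset ℕ → ℝ) : Prop :=
  (∀ S ⊆ Finset.Icc 1 n, 0 ≤ lam S) ∧
  (∑ S ∈ (Finset.Icc 1 n).powerset, lam S) ≤ 1 ∧
  ∀ i ∈ Finset.Icc 1 (n+1),
    t ≤ ∑ S ∈ (Finset.Icc 1 n).powerset, lam S * (fRank n η ℓ (Finset.Icc i n) S : ℝ)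

/-- The relaxed value `C^U`. -/
noncomputable def CU (n η : ℕ) (ℓ : ℕ → ℕ → ℕ) : ℝ :=
  sSup {t : ℝ | ∃ lam, FeasU n η ℓ t lam}

/-- The set `Ŝ = {∅, {1}, …, {n}}` of states with at most one relay transmitting. -/
def SHat (n : ℕ) : Finset (Finset ℕ) :=
  insert ∅ ((Finset.Icc 1 n).image fun i => {i})

open Fin.NatCast in
/-- The schedule `λ*` induced by a solution vector `v = (t*, λ*_{{1}}, …, λ*_{{n}}, λ*_∅)`
of the linear system `P·v = e₀`: it assigns `v i` to the state `{i}` (for `i ∈ [n]`),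
`v (n+1)` to `∅`, and `0` to any other state. -/
noncomputable def lamStar (n : ℕ) (v : Fin (n+2) → ℝ) (S : Finset ℕ) : ℝ :=
  (if S = ∅ then v (Fin.last (n+1)) else 0) +
  ∑ i ∈ Finset.Icc 1 n, if S = {i} then v (i : Fin (n+2)) else 0



section myhelpers
open Matrix
variable {K : Type*} [Field K] {m n m' n' : Type*} [Fintype m] [Fintype n]
  [Fintype m'] [Fintype n'] [DecidableEq m] [DecidableEq n]

set_option linter.unusedSectionVars false

lemma myrank_submatrix_le (A : Matrix m n K) (r : m' → m) (c : n' → n) :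
    (A.submatrix r c).rank ≤ A.rank := by
  have h : A.submatrix r c =
      (Matrix.of fun i k => if k = r i then (1 : K) else 0) * A *
      (Matrix.of fun k j => if k = c j then (1 : K) else 0) := by
    ext i j
    simp [Matrix.mul_apply, ite_mul, mul_ite]
  rw [h]
  exact le_trans (Matrix.rank_mul_le_left _ _) (Matrix.rank_mul_le_right _ _)

lemma myrank_le_of_cols (M : Matrix m n K) (g : n' → n)
    (h : ∀ j : n, (∃ j', g j' = j) ∨ ∀ i, M i j = 0) :
    M.rank ≤ (M.submatrix id g).rank := by
  rw [Matrix.rank_eq_finrank_span_cols, Matrix.rank_eq_finrank_span_cols]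
  apply Submodule.finrank_mono
  rw [Submodule.span_le]
  rintro _ ⟨j, rfl⟩
  rcases h j with ⟨j', rfl⟩ | hz
  · exact Submodule.subset_span ⟨j', rfl⟩
  · have : M.col j = 0 := funext hz
    rw [this]; exact Submodule.zero_mem _

end myhelpers

section myblocks
open Matrix
variable {P Q : Type*} [Fintype P] [Fintype Q] [DecidableEq P] [DecidableEq Q]

lemma blocks_rank_ge {η a b : ℕ} (ha : a ≤ η) (hb : b ≤ η)
    (M : Matrix (P × Fin η) (Q × Fin η) (ZMod 2))
    (p0 pi : P) (q0 qj : Q)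
    (h00 : ∀ r c, M (p0, r) (q0, c) = 0)
    (h0j : ∀ r c, M (p0, r) (qj, c) = Dblk η b r c)
    (hi0 : ∀ r c, M (pi, r) (q0, c) = Dblk η a r c) :
    a + b ≤ M.rank := by
  classical
  set rmap : Fin b ⊕ Fin a → P × Fin η :=
    Sum.elim (fun c => (p0, ⟨η - b + c.1, by have := c.isLt; omega⟩))
             (fun c => (pi, ⟨η - a + c.1, by have := c.isLt; omega⟩)) with hrmap
  set cmap : Fin b ⊕ Fin a → Q × Fin η :=
    Sum.elim (fun c => (qj, ⟨c.1, by have := c.isLt; omega⟩))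
             (fun c => (q0, ⟨c.1, by have := c.isLt; omega⟩)) with hcmap
  have hsub : M.submatrix rmap cmap =
      Matrix.fromBlocks 1 0
        (Matrix.of fun r c => M.submatrix rmap cmap (Sum.inr r) (Sum.inl c)) 1 := by
    ext i j
    rcases i with r | r <;> rcases j with c | c
    · have hc := c.isLt; have hr := r.isLt
      simp only [hrmap, hcmap, Matrix.submatrix_apply, Sum.elim_inl, h0j, Dblk,
        Matrix.of_apply, Matrix.fromBlocks_apply₁₁, Matrix.one_apply, Fin.ext_iff]
      split_ifs with h1 h2 h2 <;> first | rfl | (exfalso; omega)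
    · simp only [hrmap, hcmap, Matrix.submatrix_apply, Sum.elim_inl, Sum.elim_inr, h00,
        Matrix.fromBlocks_apply₁₂, Matrix.zero_apply]
    · simp [Matrix.fromBlocks_apply₂₁]
    · have hc := c.isLt; have hr := r.isLt
      simp only [hrmap, hcmap, Matrix.submatrix_apply, Sum.elim_inr, hi0, Dblk,
        Matrix.of_apply, Matrix.fromBlocks_apply₂₂, Matrix.one_apply, Fin.ext_iff]
      split_ifs with h1 h2 h2 <;> first | rfl | (exfalso; omega)
  have hunit : IsUnit (M.submatrix rmap cmap) := by
    rw [Matrix.isUnit_iff_isUnit_det, hsub, Matrix.det_fromBlocks_zero₁₂]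
    simp
  have h1 : (M.submatrix rmap cmap).rank = b + a := by
    rw [Matrix.rank_of_isUnit _ hunit]
    simp
  have h2 := myrank_submatrix_le M rmap cmap
  omega

lemma cols_rank_le {η a : ℕ} (M : Matrix (P × Fin η) (Q × Fin η) (ZMod 2)) (ha : a ≤ η)
    (q0 : Q) (hq : ∀ q : Q, q = q0)
    (hz : ∀ (p : P × Fin η) (c : Fin η), a ≤ (c : ℕ) → M p (q0, c) = 0) :
    M.rank ≤ a := by
  have h := myrank_le_of_cols M
      (fun c : Fin a => (q0, ⟨c.1, lt_of_lt_of_le c.isLt ha⟩)) ?_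
  · exact le_trans h (le_trans (Matrix.rank_le_card_width _) (by simp))
  · rintro ⟨q1, c⟩
    rw [hq q1]
    by_cases hlt : (c : ℕ) < a
    · exact Or.inl ⟨⟨c.1, hlt⟩, by simp⟩
    · exact Or.inr fun p => hz p c (le_of_not_gt hlt)

lemma rows_rank_le {η b : ℕ} (M : Matrix (P × Fin η) (Q × Fin η) (ZMod 2)) (hb : b ≤ η)
    (p0 : P) (hp : ∀ p : P, p = p0)
    (hz : ∀ (r : Fin η) (q : Q × Fin η), (r : ℕ) < η - b → M (p0, r) q = 0) :
    M.rank ≤ b := by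
  rw [← Matrix.rank_transpose]
  have h := myrank_le_of_cols Mᵀ
      (fun r : Fin b => (p0, ⟨η - b + r.1, by have := r.isLt; omega⟩)) ?_
  · exact le_trans h (le_trans (Matrix.rank_le_card_width _) (by simp))
  · rintro ⟨p1, r⟩
    rw [hp p1]
    by_cases hge : η - b ≤ (r : ℕ)
    · refine Or.inl ⟨⟨r.1 - (η - b), by have := r.isLt; omega⟩, ?_⟩
      have := r.isLt
      simp only [Prod.mk.injEq, Fin.ext_iff]
      exact ⟨trivial, by omega⟩
    · exact Or.inr fun q => hz r q (by omega)

end myblocks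

/-- The transfer matrix itself. -/
noncomputable def Fmat (n η : ℕ) (ℓ : ℕ → ℕ → ℕ) (Ω S : Finset ℕ) :
    Matrix (↥(rowIdx n Ω S) × Fin η) (↥(colIdx Ω S) × Fin η) (ZMod 2) :=
  Matrix.of fun p q => Dblk η (ℓ (p.1 : ℕ) (q.1 : ℕ)) p.2 q.2

lemma fRank_eq_Fmat (n η : ℕ) (ℓ : ℕ → ℕ → ℕ) (Ω S : Finset ℕ) :
    fRank n η ℓ Ω S = (Fmat n η ℓ Ω S).rank := rfl


theorem stmt1 (n η : ℕ) (hn : 1 ≤ n) (hη : 1 ≤ η) (ℓ : ℕ → ℕ → ℕ)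
    (hbound : ∀ i ≤ n, ∀ j ≤ n, ℓ i j ≤ η)
    (hds : ℓ 0 0 = 0) (hii : ∀ i, 1 ≤ i → i ≤ n → ℓ i i = 0)
    (Ω S : Finset ℕ) (hΩ : Ω ⊆ Finset.Icc 1 n) (hS : S ⊆ Finset.Icc 1 n) :
    ((Finset.Icc 1 n \ Ω) \ S).sup (fun i => ℓ i 0) + (Ω ∩ S).sup (fun j => ℓ 0 j)
        ≤ fRank n η ℓ Ω S ∧
      (((Finset.Icc 1 n \ Ω) \ S = ∅ ∨ Ω ∩ S = ∅) →
        fRank n η ℓ Ω S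
          = ((Finset.Icc 1 n \ Ω) \ S).sup (fun i => ℓ i 0)
            + (Ω ∩ S).sup (fun j => ℓ 0 j)) := by
  classical
  have h0r : (0 : ℕ) ∈ rowIdx n Ω S := Finset.mem_insert_self _ _
  have h0c : (0 : ℕ) ∈ colIdx Ω S := Finset.mem_insert_self _ _
  have hsubA : ∀ i ∈ (Finset.Icc 1 n \ Ω) \ S, 1 ≤ i ∧ i ≤ n := by
    intro i hi
    have h1 := (Finset.mem_sdiff.mp (Finset.mem_sdiff.mp hi).1).1
    rw [Finset.mem_Icc] at h1; exact h1
  have hsubB : ∀ j ∈ Ω ∩ S, 1 ≤ j ∧ j ≤ n := by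
    intro j hj
    have h1 := hΩ (Finset.mem_inter.mp hj).1
    rw [Finset.mem_Icc] at h1; exact h1
  have ha_le : ((Finset.Icc 1 n \ Ω) \ S).sup (fun i => ℓ i 0) ≤ η :=
    Finset.sup_le fun i hi => hbound i (hsubA i hi).2 0 (Nat.zero_le n)
  have hb_le : (Ω ∩ S).sup (fun j => ℓ 0 j) ≤ η :=
    Finset.sup_le fun j hj => hbound 0 (Nat.zero_le n) j (hsubB j hj).2
  obtain ⟨i0, hi0r, hi0v⟩ : ∃ i0, i0 ∈ rowIdx n Ω S ∧
      ℓ i0 0 = ((Finset.Icc 1 n \ Ω) \ S).sup (fun i => ℓ i 0) := by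
    rcases ((Finset.Icc 1 n \ Ω) \ S).eq_empty_or_nonempty with hA | hA
    · exact ⟨0, h0r, by rw [hA, Finset.sup_empty]; exact hds⟩
    · obtain ⟨i0, hi0, hv⟩ := Finset.exists_mem_eq_sup _ hA (fun i => ℓ i 0)
      exact ⟨i0, Finset.mem_insert_of_mem hi0, hv.symm⟩
  obtain ⟨j0, hj0c, hj0v⟩ : ∃ j0, j0 ∈ colIdx Ω S ∧
      ℓ 0 j0 = (Ω ∩ S).sup (fun j => ℓ 0 j) := by
    rcases (Ω ∩ S).eq_empty_or_nonempty with hB | hB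
    · exact ⟨0, h0c, by rw [hB, Finset.sup_empty]; exact hds⟩
    · obtain ⟨j0, hj0, hv⟩ := Finset.exists_mem_eq_sup _ hB (fun j => ℓ 0 j)
      exact ⟨j0, Finset.mem_insert_of_mem hj0, hv.symm⟩
  have key : ((Finset.Icc 1 n \ Ω) \ S).sup (fun i => ℓ i 0)
      + (Ω ∩ S).sup (fun j => ℓ 0 j) ≤ fRank n η ℓ Ω S := by
    rw [fRank_eq_Fmat]
    refine blocks_rank_ge ha_le hb_le _ ⟨0, h0r⟩ ⟨i0, hi0r⟩ ⟨0, h0c⟩ ⟨j0, hj0c⟩ ?_ ?_ ?_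
    · intro r c
      show Dblk η (ℓ 0 0) r c = 0
      rw [hds]
      simp [Dblk]
    · intro r c
      show Dblk η (ℓ 0 j0) r c = _
      rw [hj0v]
    · intro r c
      show Dblk η (ℓ i0 0) r c = _
      rw [hi0v]
  refine ⟨key, ?_⟩
  rintro (hA | hB)
  · have hup : fRank n η ℓ Ω S ≤ (Ω ∩ S).sup (fun j => ℓ 0 j) := by
      rw [fRank_eq_Fmat]
      refine rows_rank_le _ hb_le ⟨0, h0r⟩ ?_ ?_
      · rintro ⟨p, hp⟩
        rcases Finset.mem_insert.mp hp with h | h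
        · exact Subtype.ext h
        · rw [hA] at h; exact absurd h (Finset.notMem_empty _)
      · rintro r ⟨q, c⟩ hr
        show Dblk η (ℓ 0 (q : ℕ)) r c = 0
        have hm : ℓ 0 (q : ℕ) ≤ (Ω ∩ S).sup (fun j => ℓ 0 j) := by
          rcases Finset.mem_insert.mp q.2 with h | h
          · rw [h, hds]; exact Nat.zero_le _
          · exact Finset.le_sup h
        have hc := c.isLt
        simp only [Dblk, Matrix.of_apply]
        rw [if_neg]
        rintro ⟨h1, h2⟩
        omega
    have hkey := key
    rw [hA, Finset.sup_empty] at hkey ⊢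
    simp only [Nat.bot_eq_zero] at hkey ⊢
    omega
  · have hup : fRank n η ℓ Ω S ≤ ((Finset.Icc 1 n \ Ω) \ S).sup (fun i => ℓ i 0) := by
      rw [fRank_eq_Fmat]
      refine cols_rank_le _ ha_le ⟨0, h0c⟩ ?_ ?_
      · rintro ⟨q, hq⟩
        rcases Finset.mem_insert.mp hq with h | h
        · exact Subtype.ext h
        · rw [hB] at h; exact absurd h (Finset.notMem_empty _)
      · rintro ⟨p, r⟩ c hc
        show Dblk η (ℓ (p : ℕ) 0) r c = 0
        have hm : ℓ (p : ℕ) 0 ≤ ((Finset.Icc 1 n \ Ω) \ S).sup (fun i => ℓ i 0) := by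
          rcases Finset.mem_insert.mp p.2 with h | h
          · rw [h, hds]; exact Nat.zero_le _
          · exact Finset.le_sup (f := fun i => ℓ i 0) h
        simp only [Dblk, Matrix.of_apply]
        rw [if_neg]
        rintro ⟨h1, h2⟩
        omega
    have hkey := key
    rw [hB, Finset.sup_empty] at hkey ⊢
    simp only [Nat.bot_eq_zero] at hkey ⊢
    omega
end

section
/- For every fixed state S ⊆ [n], the function Ω ↦ f(Ω,S) is submodular: f(Ω₁,S) + f(Ω₂,S) ≥ f(Ω₁ ∩ Ω₂, S) + f(Ω₁ ∪ Ω₂, S) for all subsets Ω₁, Ω₂ ⊆ [n]. -/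
open Finset

/-! ### Auxiliary material for submodularity -/

section RankNullityAux

variable {K : Type*} [Field K] {V W : Type*} [AddCommGroup V] [Module K V]
  [AddCommGroup W] [Module K W]

lemma finrank_map_add_finrank_inf_ker (f : V →ₗ[K] W) (p : Submodule K V)
    [FiniteDimensional K p] :
    Module.finrank K (p.map f) +
      Module.finrank K (p ⊓ LinearMap.ker f : Submodule K V) = Module.finrank K p := by
  have h := LinearMap.finrank_range_add_finrank_ker (f.domRestrict p)
  rw [LinearMap.range_domRestrict, LinearMap.ker_domRestrict] at h
  rw [← h]
  congr 1
  have e1 : (LinearMap.ker f).comap p.subtype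
      = (p ⊓ LinearMap.ker f).comap p.subtype := by
    ext x
    simp [x.2]
  rw [e1]
  exact (Submodule.comapSubtypeEquivOfLe inf_le_left).finrank_eq.symm

end RankNullityAux

/-- Full column of the transfer matrix as a vector over all (block, sub-row) pairs. -/
def fullCol (η : ℕ) (ℓ : ℕ → ℕ → ℕ) (c : ℕ × Fin η) : (ℕ × Fin η) → ZMod 2 :=
  fun r => Dblk η (ℓ r.1 c.1) r.2 c.2

/-- Span of the full columns indexed by a block column set `C`. -/
noncomputable def colSpan (η : ℕ) (ℓ : ℕ → ℕ → ℕ) (C : Finset ℕ) :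
    Submodule (ZMod 2) ((ℕ × Fin η) → ZMod 2) :=
  Submodule.span (ZMod 2) (fullCol η ℓ '' ((↑C : Set ℕ) ×ˢ (Set.univ : Set (Fin η))))

/-- Restriction of a vector to the rows in a block row set `R`. -/
def resMap (η : ℕ) (R : Finset ℕ) :
    ((ℕ × Fin η) → ZMod 2) →ₗ[ZMod 2] ((↥R × Fin η) → ZMod 2) where
  toFun v := fun p => v ((p.1 : ℕ), p.2)
  map_add' _ _ := rfl
  map_smul' _ _ := rfl

lemma mem_ker_resMap {η : ℕ} {R : Finset ℕ} {v : (ℕ × Fin η) → ZMod 2} :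
    v ∈ LinearMap.ker (resMap η R) ↔ ∀ i ∈ R, ∀ a : Fin η, v (i, a) = 0 := by
  constructor
  · intro h i hi a
    exact congrFun (LinearMap.mem_ker.mp h) (⟨i, hi⟩, a)
  · intro h
    apply LinearMap.mem_ker.mpr
    funext p
    exact h p.1 p.1.2 p.2

instance colSpan_fd (η : ℕ) (ℓ : ℕ → ℕ → ℕ) (C : Finset ℕ) :
    FiniteDimensional (ZMod 2) (colSpan η ℓ C) :=
  FiniteDimensional.span_of_finite _ <|
    Set.Finite.image _ <| Set.Finite.prod C.finite_toSet (Set.finite_univ)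

lemma colSpan_union (η : ℕ) (ℓ : ℕ → ℕ → ℕ) (C₁ C₂ : Finset ℕ) :
    colSpan η ℓ (C₁ ∪ C₂) = colSpan η ℓ C₁ ⊔ colSpan η ℓ C₂ := by
  unfold colSpan
  rw [← Submodule.span_union, ← Set.image_union, ← Set.union_prod, Finset.coe_union]

lemma colSpan_mono (η : ℕ) (ℓ : ℕ → ℕ → ℕ) {C₁ C₂ : Finset ℕ} (h : C₁ ⊆ C₂) :
    colSpan η ℓ C₁ ≤ colSpan η ℓ C₂ :=
  Submodule.span_mono <| Set.image_mono <| Set.prod_mono (by exact_mod_cast h) le_rfl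

/-- `fRank` as the dimension of a restricted column span. -/
lemma fRank_eq_finrank (n η : ℕ) (ℓ : ℕ → ℕ → ℕ) (Ω S : Finset ℕ) :
    fRank n η ℓ Ω S =
      Module.finrank (ZMod 2)
        ((colSpan η ℓ (colIdx Ω S)).map (resMap η (rowIdx n Ω S))) := by
  have hset : (Set.range (Matrix.of fun (p : ↥(rowIdx n Ω S) × Fin η)
        (q : ↥(colIdx Ω S) × Fin η) => Dblk η (ℓ (p.1 : ℕ) (q.1 : ℕ)) p.2 q.2).col)
      = ⇑(resMap η (rowIdx n Ω S)) ''
        (fullCol η ℓ '' (((colIdx Ω S) : Set ℕ) ×ˢ (Set.univ : Set (Fin η)))) := by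
    ext v
    constructor
    · rintro ⟨q, rfl⟩
      exact ⟨fullCol η ℓ ((q.1 : ℕ), q.2),
        ⟨((q.1 : ℕ), q.2), ⟨q.1.2, Set.mem_univ _⟩, rfl⟩, rfl⟩
    · rintro ⟨w, ⟨c, ⟨hc1, -⟩, rfl⟩, rfl⟩
      exact ⟨(⟨c.1, hc1⟩, c.2), rfl⟩
  rw [fRank, Matrix.rank_eq_finrank_span_cols, colSpan, Submodule.map_span, hset]

lemma rowIdx_union (n : ℕ) (Ω₁ Ω₂ S : Finset ℕ) :
    rowIdx n Ω₁ S ∪ rowIdx n Ω₂ S = rowIdx n (Ω₁ ∩ Ω₂) S := by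
  unfold rowIdx
  ext x
  simp only [Finset.mem_union, Finset.mem_insert, Finset.mem_sdiff, Finset.mem_inter]
  tauto

lemma rowIdx_inter (n : ℕ) (Ω₁ Ω₂ S : Finset ℕ) :
    rowIdx n Ω₁ S ∩ rowIdx n Ω₂ S = rowIdx n (Ω₁ ∪ Ω₂) S := by
  unfold rowIdx
  ext x
  simp only [Finset.mem_union, Finset.mem_insert, Finset.mem_sdiff, Finset.mem_inter]
  tauto

lemma colIdx_inter (Ω₁ Ω₂ S : Finset ℕ) :
    colIdx (Ω₁ ∩ Ω₂) S ⊆ colIdx Ω₁ S ∩ colIdx Ω₂ S := by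
  unfold colIdx
  intro x
  simp only [Finset.mem_inter, Finset.mem_insert]
  tauto

lemma colIdx_union (Ω₁ Ω₂ S : Finset ℕ) :
    colIdx (Ω₁ ∪ Ω₂) S = colIdx Ω₁ S ∪ colIdx Ω₂ S := by
  unfold colIdx
  ext x
  simp only [Finset.mem_union, Finset.mem_insert, Finset.mem_inter]
  tauto

lemma ker_resMap_union (η : ℕ) (R₁ R₂ : Finset ℕ) :
    LinearMap.ker (resMap η (R₁ ∪ R₂))
      = LinearMap.ker (resMap η R₁) ⊓ LinearMap.ker (resMap η R₂) := by
  ext v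
  simp only [Submodule.mem_inf, mem_ker_resMap, Finset.mem_union]
  constructor
  · exact fun h => ⟨fun i hi => h i (Or.inl hi), fun i hi => h i (Or.inr hi)⟩
  · rintro ⟨h₁, h₂⟩ i (hi | hi)
    exacts [h₁ i hi, h₂ i hi]

lemma ker_resMap_anti (η : ℕ) {R₁ R₂ : Finset ℕ} (h : R₁ ⊆ R₂) :
    LinearMap.ker (resMap η R₂) ≤ LinearMap.ker (resMap η R₁) := by
  intro v hv
  rw [mem_ker_resMap] at hv ⊢
  exact fun i hi a => hv i (h hi) a

theorem stmt2 (n η : ℕ) (hn : 1 ≤ n) (hη : 1 ≤ η) (ℓ : ℕ → ℕ → ℕ)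
    (hbound : ∀ i ≤ n, ∀ j ≤ n, ℓ i j ≤ η)
    (hds : ℓ 0 0 = 0) (hii : ∀ i, 1 ≤ i → i ≤ n → ℓ i i = 0)
    (S : Finset ℕ) (hS : S ⊆ Finset.Icc 1 n)
    (Ω₁ Ω₂ : Finset ℕ) (hΩ₁ : Ω₁ ⊆ Finset.Icc 1 n) (hΩ₂ : Ω₂ ⊆ Finset.Icc 1 n) :
    fRank n η ℓ (Ω₁ ∩ Ω₂) S + fRank n η ℓ (Ω₁ ∪ Ω₂) S
      ≤ fRank n η ℓ Ω₁ S + fRank n η ℓ Ω₂ S := by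
  classical
  set V₁ := colSpan η ℓ (colIdx Ω₁ S) with hV₁
  set V₂ := colSpan η ℓ (colIdx Ω₂ S) with hV₂
  set K₁ := LinearMap.ker (resMap η (rowIdx n Ω₁ S)) with hK₁
  set K₂ := LinearMap.ker (resMap η (rowIdx n Ω₂ S)) with hK₂
  set A := V₁ ⊓ K₁ with hA
  set B := V₂ ⊓ K₂ with hB
  haveI : FiniteDimensional (ZMod 2) A :=
    Submodule.finiteDimensional_of_le (inf_le_left : A ≤ V₁)
  haveI : FiniteDimensional (ZMod 2) B :=
    Submodule.finiteDimensional_of_le (inf_le_left : B ≤ V₂)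
  haveI : FiniteDimensional (ZMod 2) (V₁ ⊓ V₂ : Submodule (ZMod 2) _) :=
    Submodule.finiteDimensional_of_le (inf_le_left : V₁ ⊓ V₂ ≤ V₁)
  -- rank–nullity identities for Ω₁ and Ω₂
  have h₁ : fRank n η ℓ Ω₁ S + Module.finrank (ZMod 2) A = Module.finrank (ZMod 2) V₁ := by
    rw [fRank_eq_finrank, hA, hK₁]
    exact finrank_map_add_finrank_inf_ker _ _
  have h₂ : fRank n η ℓ Ω₂ S + Module.finrank (ZMod 2) B = Module.finrank (ZMod 2) V₂ := by
    rw [fRank_eq_finrank, hB, hK₂]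
    exact finrank_map_add_finrank_inf_ker _ _
  -- the intersection term
  have hint : fRank n η ℓ (Ω₁ ∩ Ω₂) S + Module.finrank (ZMod 2) (A ⊓ B : Submodule (ZMod 2) _)
      ≤ Module.finrank (ZMod 2) (V₁ ⊓ V₂ : Submodule (ZMod 2) _) := by
    have hVle : colSpan η ℓ (colIdx (Ω₁ ∩ Ω₂) S) ≤ V₁ ⊓ V₂ := by
      refine le_inf ?_ ?_ <;> refine colSpan_mono η ℓ ?_ <;>
        intro x hx <;> have := colIdx_inter Ω₁ Ω₂ S hx <;>
        simp only [Finset.mem_inter] at this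
      · exact this.1
      · exact this.2
    have hker : LinearMap.ker (resMap η (rowIdx n (Ω₁ ∩ Ω₂) S)) = K₁ ⊓ K₂ := by
      rw [← rowIdx_union, ker_resMap_union]
    have e := finrank_map_add_finrank_inf_ker (resMap η (rowIdx n (Ω₁ ∩ Ω₂) S)) (V₁ ⊓ V₂)
    have hAB : (V₁ ⊓ V₂) ⊓ LinearMap.ker (resMap η (rowIdx n (Ω₁ ∩ Ω₂) S)) = A ⊓ B := by
      rw [hker, hA, hB]
      rw [inf_inf_inf_comm]
    rw [hAB] at e
    have hmono : fRank n η ℓ (Ω₁ ∩ Ω₂) S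
        ≤ Module.finrank (ZMod 2) ((V₁ ⊓ V₂).map (resMap η (rowIdx n (Ω₁ ∩ Ω₂) S))) := by
      rw [fRank_eq_finrank]
      exact Submodule.finrank_mono (Submodule.map_mono hVle)
    omega
  -- the union term
  have huni : fRank n η ℓ (Ω₁ ∪ Ω₂) S + Module.finrank (ZMod 2) (A ⊔ B : Submodule (ZMod 2) _)
      ≤ Module.finrank (ZMod 2) (V₁ ⊔ V₂ : Submodule (ZMod 2) _) := by
    have hVeq : colSpan η ℓ (colIdx (Ω₁ ∪ Ω₂) S) = V₁ ⊔ V₂ := by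
      rw [colIdx_union, colSpan_union]
    have e := finrank_map_add_finrank_inf_ker (resMap η (rowIdx n (Ω₁ ∪ Ω₂) S)) (V₁ ⊔ V₂)
    have hABle : A ⊔ B ≤ (V₁ ⊔ V₂) ⊓ LinearMap.ker (resMap η (rowIdx n (Ω₁ ∪ Ω₂) S)) := by
      have hker : K₁ ⊔ K₂ ≤ LinearMap.ker (resMap η (rowIdx n (Ω₁ ∪ Ω₂) S)) := by
        rw [← rowIdx_inter]
        exact sup_le (ker_resMap_anti η Finset.inter_subset_left)
          (ker_resMap_anti η Finset.inter_subset_right)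
      exact sup_le
        (le_inf (inf_le_left.trans le_sup_left) (inf_le_right.trans (le_sup_left.trans hker)))
        (le_inf (inf_le_left.trans le_sup_right) (inf_le_right.trans (le_sup_right.trans hker)))
    have hmono : Module.finrank (ZMod 2) (A ⊔ B : Submodule (ZMod 2) _)
        ≤ Module.finrank (ZMod 2)
          ((V₁ ⊔ V₂) ⊓ LinearMap.ker (resMap η (rowIdx n (Ω₁ ∪ Ω₂) S)) :
            Submodule (ZMod 2) _) := by
      haveI : FiniteDimensional (ZMod 2)
          ((V₁ ⊔ V₂) ⊓ LinearMap.ker (resMap η (rowIdx n (Ω₁ ∪ Ω₂) S)) :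
            Submodule (ZMod 2) _) :=
        Submodule.finiteDimensional_of_le inf_le_left
      exact Submodule.finrank_mono hABle
    have heq : fRank n η ℓ (Ω₁ ∪ Ω₂) S = Module.finrank (ZMod 2)
        ((V₁ ⊔ V₂).map (resMap η (rowIdx n (Ω₁ ∪ Ω₂) S))) := by
      rw [fRank_eq_finrank, hVeq]
    omega
  have hVsum := Submodule.finrank_sup_add_finrank_inf_eq V₁ V₂
  have hABsum := Submodule.finrank_sup_add_finrank_inf_eq A B
  omega
end

section
/- For every fixed cut Ω ⊆ [n], the function S ↦ f(Ω,S) is submodular: f(Ω,S₁) + f(Ω,S₂) ≥ f(Ω, S₁ ∪ S₂) + f(Ω, S₁ ∩ S₂) for all subsets S₁, S₂ ⊆ [n]. -/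
open Finset

section SubmodAux

open Submodule Module Matrix

/-- The ambient row index Finset: all rows that can ever appear (`S = ∅`). -/
abbrev RTa (n : ℕ) (Ω : Finset ℕ) : Finset ℕ := rowIdx n Ω ∅

/-- The ambient row index type. -/
abbrev IdxA (n η : ℕ) (Ω : Finset ℕ) := (↥(RTa n Ω)) × Fin η

/-- A column of the "full-rows" transfer matrix. -/
def colvA (n η : ℕ) (ℓ : ℕ → ℕ → ℕ) (Ω : Finset ℕ) (q : ℕ × Fin η) :
    IdxA n η Ω → ZMod 2 :=
  fun p => Dblk η (ℓ (p.1 : ℕ) q.1) p.2 q.2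

/-- The generating set for the state `S`: columns indexed by `colIdx Ω S`, plus
unit vectors at rows that get deleted in state `S`. -/
def XsetA (n η : ℕ) (ℓ : ℕ → ℕ → ℕ) (Ω S : Finset ℕ) : Set (IdxA n η Ω → ZMod 2) :=
  {v | ∃ j k, (j = 0 ∨ (j ∈ Ω ∧ j ∈ S)) ∧ v = colvA n η ℓ Ω (j, k)} ∪
  {v | ∃ p : IdxA n η Ω, (p.1 : ℕ) ∈ S ∧ v = Pi.single p 1}

noncomputable def WmodA (n η : ℕ) (ℓ : ℕ → ℕ → ℕ) (Ω S : Finset ℕ) :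
    Submodule (ZMod 2) (IdxA n η Ω → ZMod 2) :=
  Submodule.span (ZMod 2) (XsetA n η ℓ Ω S)

lemma XsetA_union (n η : ℕ) (ℓ : ℕ → ℕ → ℕ) (Ω S₁ S₂ : Finset ℕ) :
    XsetA n η ℓ Ω (S₁ ∪ S₂) = XsetA n η ℓ Ω S₁ ∪ XsetA n η ℓ Ω S₂ := by
  ext v
  simp only [XsetA, Set.mem_union, Set.mem_setOf_eq, Finset.mem_union]
  constructor
  · rintro (⟨j, k, hj, rfl⟩ | ⟨p, hp | hp, rfl⟩)
    · rcases hj with rfl | ⟨hΩ, h1 | h2⟩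
      · exact Or.inl (Or.inl ⟨0, k, Or.inl rfl, rfl⟩)
      · exact Or.inl (Or.inl ⟨j, k, Or.inr ⟨hΩ, h1⟩, rfl⟩)
      · exact Or.inr (Or.inl ⟨j, k, Or.inr ⟨hΩ, h2⟩, rfl⟩)
    · exact Or.inl (Or.inr ⟨p, hp, rfl⟩)
    · exact Or.inr (Or.inr ⟨p, hp, rfl⟩)
  · rintro ((⟨j, k, hj, rfl⟩ | ⟨p, hp, rfl⟩) | (⟨j, k, hj, rfl⟩ | ⟨p, hp, rfl⟩))
    · exact Or.inl ⟨j, k, by tauto, rfl⟩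
    · exact Or.inr ⟨p, Or.inl hp, rfl⟩
    · exact Or.inl ⟨j, k, by tauto, rfl⟩
    · exact Or.inr ⟨p, Or.inr hp, rfl⟩

lemma XsetA_mono (n η : ℕ) (ℓ : ℕ → ℕ → ℕ) (Ω : Finset ℕ) {S₁ S₂ : Finset ℕ}
    (h : S₁ ⊆ S₂) : XsetA n η ℓ Ω S₁ ⊆ XsetA n η ℓ Ω S₂ := by
  intro v hv
  simp only [XsetA, Set.mem_union, Set.mem_setOf_eq] at hv ⊢
  rcases hv with ⟨j, k, hj, rfl⟩ | ⟨p, hp, rfl⟩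
  · exact Or.inl ⟨j, k, by tauto, rfl⟩
  · exact Or.inr ⟨p, h hp, rfl⟩

set_option maxHeartbeats 1000000 in
set_option synthInstance.maxHeartbeats 400000 in
lemma keyA (n η : ℕ) (ℓ : ℕ → ℕ → ℕ) (Ω : Finset ℕ) (S : Finset ℕ)
    (hS : S ⊆ Finset.Icc 1 n) :
    finrank (ZMod 2) (WmodA n η ℓ Ω S) =
      fRank n η ℓ Ω S + η * ((Finset.Icc 1 n \ Ω) ∩ S).card := by
  have h0S : (0 : ℕ) ∉ S := fun h => by simpa using hS h
  have h1S : ∀ x ∈ S, 1 ≤ x := fun x hx => (Finset.mem_Icc.mp (hS hx)).1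
  have hsub : rowIdx n Ω S ⊆ RTa n Ω := by
    intro x hx
    simp only [rowIdx, Finset.mem_insert, Finset.mem_sdiff] at hx ⊢
    tauto
  -- the inclusion of row indices and the restriction map π
  set e : (↥(rowIdx n Ω S) × Fin η) → IdxA n η Ω :=
    fun p => (⟨(p.1 : ℕ), hsub p.1.2⟩, p.2) with he
  set π : (IdxA n η Ω → ZMod 2) →ₗ[ZMod 2] ((↥(rowIdx n Ω S) × Fin η) → ZMod 2) :=
    LinearMap.funLeft (ZMod 2) (ZMod 2) e with hπ
  -- membership characterization
  have hmem : ∀ r : ↥(RTa n Ω), ((r : ℕ) ∈ rowIdx n Ω S ↔ (r : ℕ) ∉ S) := by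
    rintro ⟨r, hr⟩
    simp only [RTa, rowIdx, Finset.mem_insert, Finset.mem_sdiff,
      Finset.notMem_empty, not_false_iff, and_true] at hr ⊢
    rcases hr with rfl | hr
    · simp [h0S]
    · constructor
      · rintro (rfl | h)
        · exact h0S
        · exact h.2
      · intro h
        exact Or.inr ⟨hr, h⟩
  -- π kills the unit vectors at deleted rows
  have hπ0 : ∀ p : IdxA n η Ω, (p.1 : ℕ) ∈ S →
      π (Pi.single p (1 : ZMod 2)) = 0 := by
    intro p hp
    funext x
    simp only [hπ, LinearMap.funLeft_apply, Pi.zero_apply]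
    refine Pi.single_eq_of_ne (fun hxe => ?_) 1
    have hx : ((e x).1 : ℕ) ∈ rowIdx n Ω S := x.1.2
    rw [hxe] at hx
    exact (hmem p.1).mp hx hp
  -- kernel of π is spanned by the unit vectors at deleted rows
  have hker : LinearMap.ker π =
      Submodule.span (ZMod 2)
        {v | ∃ p : IdxA n η Ω, (p.1 : ℕ) ∈ S ∧ v = Pi.single p 1} := by
    apply le_antisymm
    · intro f hf
      have hf0 : ∀ x, f (e x) = 0 := fun x => congrFun (LinearMap.mem_ker.mp hf) x
      have hf' : ∀ p : IdxA n η Ω, (p.1 : ℕ) ∉ S → f p = 0 := by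
        intro p hp
        have hmem' : (p.1 : ℕ) ∈ rowIdx n Ω S := (hmem p.1).mpr hp
        have hep : e (⟨⟨(p.1 : ℕ), hmem'⟩, p.2⟩) = p := by
          ext <;> rfl
        rw [← hep]; exact hf0 _
      have hfe : f = ∑ p : IdxA n η Ω, Pi.single p (f p) :=
        (Finset.univ_sum_single f).symm
      rw [hfe]
      apply Submodule.sum_mem
      intro p _
      by_cases hp : (p.1 : ℕ) ∈ S
      · have : Pi.single p (f p) = ((f p) • Pi.single p (1 : ZMod 2) : IdxA n η Ω → ZMod 2) := by
          funext q
          by_cases hq : q = p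
          · subst hq; simp
          · simp [Pi.single_eq_of_ne hq]
        rw [this]
        have hmem1 : (Pi.single p (1 : ZMod 2)) ∈
            {v : IdxA n η Ω → ZMod 2 | ∃ p' : IdxA n η Ω, (p'.1 : ℕ) ∈ S ∧ v = Pi.single p' 1} :=
          ⟨p, hp, rfl⟩
        exact Submodule.smul_mem _ _ (Submodule.subset_span hmem1)
      · rw [hf' p hp, Pi.single_zero]
        exact Submodule.zero_mem _
    · rw [Submodule.span_le]
      rintro v ⟨p, hp, rfl⟩
      exact LinearMap.mem_ker.mpr (hπ0 p hp)
  have hUle : LinearMap.ker π ≤ WmodA n η ℓ Ω S := by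
    rw [hker]
    exact Submodule.span_mono Set.subset_union_right
  -- the transfer matrix
  set M : Matrix (↥(rowIdx n Ω S) × Fin η) (↥(colIdx Ω S) × Fin η) (ZMod 2) :=
    Matrix.of fun p q => Dblk η (ℓ (p.1 : ℕ) (q.1 : ℕ)) p.2 q.2 with hM
  have hfR : fRank n η ℓ Ω S = M.rank := rfl
  -- image of the span under π
  have himg : Submodule.map π (WmodA n η ℓ Ω S) =
      Submodule.span (ZMod 2) (Set.range Mᵀ) := by
    rw [WmodA, Submodule.map_span]
    have himg2 : π '' (XsetA n η ℓ Ω S) =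
        Set.range Mᵀ ∪ (π '' {v | ∃ p : IdxA n η Ω, (p.1 : ℕ) ∈ S ∧ v = Pi.single p 1}) := by
      rw [XsetA, Set.image_union]
      congr 1
      ext v
      constructor
      · rintro ⟨w, ⟨j, k, hj, rfl⟩, rfl⟩
        have hjc : j ∈ colIdx Ω S := by
          simp only [colIdx, Finset.mem_insert, Finset.mem_inter]; tauto
        refine ⟨(⟨j, hjc⟩, k), ?_⟩
        rfl
      · rintro ⟨⟨⟨j, hj⟩, k⟩, rfl⟩
        refine ⟨colvA n η ℓ Ω (j, k), ⟨j, k, ?_, rfl⟩, rfl⟩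
        simpa only [colIdx, Finset.mem_insert, Finset.mem_inter] using hj
    rw [himg2, Submodule.span_union]
    have : Submodule.span (ZMod 2)
        (π '' {v | ∃ p : IdxA n η Ω, (p.1 : ℕ) ∈ S ∧ v = Pi.single p 1}) = ⊥ := by
      rw [← Submodule.span_empty (R := ZMod 2)]
      apply le_antisymm
      · rw [Submodule.span_le]
        rintro w ⟨v, ⟨p, hp, rfl⟩, rfl⟩
        simp [hπ0 p hp, Submodule.span_empty]
      · exact Submodule.span_mono (Set.empty_subset _)
    rw [this, sup_bot_eq]
  -- rank–nullity for π restricted to W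
  have hfin : FiniteDimensional (ZMod 2) (WmodA n η ℓ Ω S) := inferInstance
  set φ : (WmodA n η ℓ Ω S) →ₗ[ZMod 2] ((↥(rowIdx n Ω S) × Fin η) → ZMod 2) :=
    π.comp (WmodA n η ℓ Ω S).subtype with hφ
  have hrn := LinearMap.finrank_range_add_finrank_ker φ
  have hrange : LinearMap.range φ = Submodule.map π (WmodA n η ℓ Ω S) := by
    rw [hφ, LinearMap.range_comp, Submodule.range_subtype]
  have hkerφ : LinearMap.ker φ = Submodule.comap (WmodA n η ℓ Ω S).subtype
      (LinearMap.ker π) := by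
    rw [hφ, LinearMap.ker_comp]
  have hker_fr : finrank (ZMod 2) (LinearMap.ker φ) =
      finrank (ZMod 2) (LinearMap.ker π) := by
    rw [hkerφ]
    exact (Submodule.comapSubtypeEquivOfLe hUle).finrank_eq
  -- finrank of the image is the matrix rank
  have himg_fr : finrank (ZMod 2) (Submodule.map π (WmodA n η ℓ Ω S)) =
      fRank n η ℓ Ω S := by
    rw [himg, hfR, Matrix.rank_eq_finrank_span_cols]
    rfl
  -- finrank of the kernel
  have hker_fr2 : finrank (ZMod 2) (LinearMap.ker π) =
      η * ((Finset.Icc 1 n \ Ω) ∩ S).card := by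
    rw [hker]
    set g : {p : IdxA n η Ω // (p.1 : ℕ) ∈ S} → (IdxA n η Ω → ZMod 2) :=
      fun c => Pi.single c.1 1 with hg
    have hset : {v | ∃ p : IdxA n η Ω, (p.1 : ℕ) ∈ S ∧ v = Pi.single p 1} =
        Set.range g := by
      ext v
      constructor
      · rintro ⟨p, hp, rfl⟩; exact ⟨⟨p, hp⟩, rfl⟩
      · rintro ⟨⟨p, hp⟩, rfl⟩; exact ⟨p, hp, rfl⟩
    have hli0 : LinearIndependent (ZMod 2)
        (fun p : IdxA n η Ω => Pi.single p (1 : ZMod 2)) := by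
      have := (Pi.basisFun (ZMod 2) (IdxA n η Ω)).linearIndependent
      have hb : ⇑(Pi.basisFun (ZMod 2) (IdxA n η Ω)) =
          fun p : IdxA n η Ω => Pi.single p (1 : ZMod 2) := by
        funext p; exact Pi.basisFun_apply _ _ p
      rwa [hb] at this
    have hli : LinearIndependent (ZMod 2) g :=
      hli0.comp Subtype.val Subtype.val_injective
    rw [hset, finrank_span_eq_card hli]
    -- card computation
    have e1 : {p : IdxA n η Ω // (p.1 : ℕ) ∈ S} ≃
        {r : ↥(RTa n Ω) // (r : ℕ) ∈ S} × Fin η :=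
      { toFun := fun x => (⟨x.1.1, x.2⟩, x.1.2)
        invFun := fun y => ⟨(y.1.1, y.2), y.1.2⟩
        left_inv := fun x => rfl
        right_inv := fun y => rfl }
    have e2 : {r : ↥(RTa n Ω) // (r : ℕ) ∈ S} ≃ {x : ℕ // x ∈ RTa n Ω ∧ x ∈ S} :=
      Equiv.subtypeSubtypeEquivSubtypeInter _ _
    have e3 : {x : ℕ // x ∈ RTa n Ω ∧ x ∈ S} ≃ ↥(RTa n Ω ∩ S) :=
      Equiv.subtypeEquivRight (fun x => (Finset.mem_inter).symm)
    have hcard : Fintype.card {p : IdxA n η Ω // (p.1 : ℕ) ∈ S} =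
        (RTa n Ω ∩ S).card * η := by
      rw [Fintype.card_congr (e1.trans ((e2.trans e3).prodCongr (Equiv.refl (Fin η)))),
        Fintype.card_prod, Fintype.card_coe, Fintype.card_fin]
    have hRTS : RTa n Ω ∩ S = (Finset.Icc 1 n \ Ω) ∩ S := by
      ext x
      simp only [RTa, rowIdx, Finset.mem_inter, Finset.mem_insert, Finset.mem_sdiff,
        Finset.notMem_empty, not_false_iff, and_true]
      constructor
      · rintro ⟨rfl | h, hx⟩
        · exact absurd hx h0S
        · exact ⟨h, hx⟩
      · rintro ⟨h, hx⟩
        exact ⟨Or.inr h, hx⟩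
    rw [hcard, hRTS, Nat.mul_comm]
  -- assemble
  rw [hrange, hker_fr, himg_fr, hker_fr2] at hrn
  exact hrn.symm

end SubmodAux

theorem stmt3 (n η : ℕ) (hn : 1 ≤ n) (hη : 1 ≤ η) (ℓ : ℕ → ℕ → ℕ)
    (hbound : ∀ i ≤ n, ∀ j ≤ n, ℓ i j ≤ η)
    (hds : ℓ 0 0 = 0) (hii : ∀ i, 1 ≤ i → i ≤ n → ℓ i i = 0)
    (Ω : Finset ℕ) (hΩ : Ω ⊆ Finset.Icc 1 n)
    (S₁ S₂ : Finset ℕ) (hS₁ : S₁ ⊆ Finset.Icc 1 n) (hS₂ : S₂ ⊆ Finset.Icc 1 n) :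
    fRank n η ℓ Ω (S₁ ∪ S₂) + fRank n η ℓ Ω (S₁ ∩ S₂)
      ≤ fRank n η ℓ Ω S₁ + fRank n η ℓ Ω S₂ := by
  have kU := keyA n η ℓ Ω (S₁ ∪ S₂) (Finset.union_subset hS₁ hS₂)
  have kI := keyA n η ℓ Ω (S₁ ∩ S₂) (Finset.Subset.trans Finset.inter_subset_left hS₁)
  have k1 := keyA n η ℓ Ω S₁ hS₁
  have k2 := keyA n η ℓ Ω S₂ hS₂
  have hsup : WmodA n η ℓ Ω (S₁ ∪ S₂) = WmodA n η ℓ Ω S₁ ⊔ WmodA n η ℓ Ω S₂ := by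
    rw [WmodA, XsetA_union, Submodule.span_union]; rfl
  have hinf : WmodA n η ℓ Ω (S₁ ∩ S₂) ≤ WmodA n η ℓ Ω S₁ ⊓ WmodA n η ℓ Ω S₂ :=
    le_inf
      (Submodule.span_mono (XsetA_mono n η ℓ Ω Finset.inter_subset_left))
      (Submodule.span_mono (XsetA_mono n η ℓ Ω Finset.inter_subset_right))
  have hmod := Submodule.finrank_sup_add_finrank_inf_eq
    (WmodA n η ℓ Ω S₁) (WmodA n η ℓ Ω S₂)
  have hmono : Module.finrank (ZMod 2) (WmodA n η ℓ Ω (S₁ ∩ S₂)) ≤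
      Module.finrank (ZMod 2) ↥(WmodA n η ℓ Ω S₁ ⊓ WmodA n η ℓ Ω S₂) :=
    Submodule.finrank_mono hinf
  have hW : Module.finrank (ZMod 2) (WmodA n η ℓ Ω (S₁ ∪ S₂)) +
      Module.finrank (ZMod 2) (WmodA n η ℓ Ω (S₁ ∩ S₂)) ≤
      Module.finrank (ZMod 2) (WmodA n η ℓ Ω S₁) +
      Module.finrank (ZMod 2) (WmodA n η ℓ Ω S₂) := by
    rw [hsup]
    exact le_trans (Nat.add_le_add_left hmono _) (le_of_eq hmod)
  rw [kU, kI, k1, k2] at hW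
  have hcard : ((Finset.Icc 1 n \ Ω) ∩ (S₁ ∪ S₂)).card +
      ((Finset.Icc 1 n \ Ω) ∩ (S₁ ∩ S₂)).card =
      ((Finset.Icc 1 n \ Ω) ∩ S₁).card + ((Finset.Icc 1 n \ Ω) ∩ S₂).card := by
    rw [Finset.inter_union_distrib_left, Finset.inter_inter_distrib_left]
    exact Finset.card_union_add_card_inter _ _
  have hc2 : η * ((Finset.Icc 1 n \ Ω) ∩ (S₁ ∪ S₂)).card +
      η * ((Finset.Icc 1 n \ Ω) ∩ (S₁ ∩ S₂)).card =
      η * ((Finset.Icc 1 n \ Ω) ∩ S₁).card + η * ((Finset.Icc 1 n \ Ω) ∩ S₂).card := by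
    rw [← Nat.mul_add, ← Nat.mul_add, hcard]
  set aU := η * ((Finset.Icc 1 n \ Ω) ∩ (S₁ ∪ S₂)).card with haU
  set aI := η * ((Finset.Icc 1 n \ Ω) ∩ (S₁ ∩ S₂)).card with haI
  set a1 := η * ((Finset.Icc 1 n \ Ω) ∩ S₁).card with ha1
  set a2 := η * ((Finset.Icc 1 n \ Ω) ∩ S₂).card with ha2
  omega
end

section
/- For all integers 1 ≤ b < a ≤ j ≤ n, f([a:n],{j}) − ℓ_{a−1,s} ≥ f([b:n],{j}) − ℓ_{b−1,s}. -/
open Finset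

open Matrix Module
lemma aux1 {F W W' : Type*} [Field F] [AddCommGroup W] [Module F W]
    [FiniteDimensional F W] [AddCommGroup W'] [Module F W']
    (π : W →ₗ[F] W') (V : Submodule F W) (U : Submodule F W')
    (hU : U ≤ V.map π) (k : ℕ) (x : Fin k → W)
    (hx : ∀ t, x t ∈ V) (hker : ∀ t, π (x t) = 0)
    (hind : LinearIndependent F x) :
    finrank F U + k ≤ finrank F V := by
  classical
  have hsum := LinearMap.finrank_range_add_finrank_ker (π.comp V.subtype)
  have hrange : LinearMap.range (π.comp V.subtype) = V.map π := by
    rw [LinearMap.range_comp, Submodule.range_subtype]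
  have h1 : finrank F U ≤ finrank F (LinearMap.range (π.comp V.subtype)) := by
    rw [hrange]; exact Submodule.finrank_mono hU
  have h2 : k ≤ finrank F (LinearMap.ker (π.comp V.subtype)) := by
    have hker' : ∀ t, (⟨x t, hx t⟩ : V) ∈ LinearMap.ker (π.comp V.subtype) := by
      intro t
      rw [LinearMap.mem_ker, LinearMap.comp_apply, Submodule.subtype_apply]
      exact hker t
    have hu : LinearIndependent F
        (fun t => (⟨⟨x t, hx t⟩, hker' t⟩ : LinearMap.ker (π.comp V.subtype))) := by
      refine LinearIndependent.of_comp
        (V.subtype.comp (LinearMap.ker (π.comp V.subtype)).subtype) ?_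
      exact hind
    simpa using hu.fintype_card_le_finrank
  omega

lemma rank_ge_aux {F : Type*} [Field F] {m m' c c' : Type*}
    [Fintype m] [Fintype m'] [Fintype c] [Fintype c']
    (M : Matrix m c F) (N : Matrix m' c' F) (ι : m' → m)
    (e : c' → c) (hMN : ∀ p q, N p q = M (ι p) (e q))
    (k : ℕ) (v : Fin k → c) (hzero : ∀ t p, M (ι p) (v t) = 0)
    (hind : LinearIndependent F (fun t => Mᵀ (v t))) :
    N.rank + k ≤ M.rank := by
  classical
  rw [M.rank_eq_finrank_span_cols, N.rank_eq_finrank_span_cols]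
  refine aux1 (LinearMap.funLeft F F ι) _ _ ?_ k (fun t => Mᵀ (v t))
    (fun t => Submodule.subset_span ⟨v t, rfl⟩) ?_ hind
  · rw [Submodule.span_le]
    rintro _ ⟨q, rfl⟩
    exact ⟨Mᵀ (e q), Submodule.subset_span ⟨e q, rfl⟩,
      by ext p; simp [LinearMap.funLeft_apply, hMN, Matrix.transpose_apply]⟩
  · intro t
    ext p
    simpa [LinearMap.funLeft_apply, Matrix.transpose_apply] using hzero t p

theorem stmt8 (n η : ℕ) (hn : 1 ≤ n) (hη : 1 ≤ η) (ℓ : ℕ → ℕ → ℕ)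
    (hbound : ∀ i ≤ n, ∀ j ≤ n, ℓ i j ≤ η)
    (hds : ℓ 0 0 = 0) (hii : ∀ i, 1 ≤ i → i ≤ n → ℓ i i = 0)
    (hmono : ∀ i j, 1 ≤ i → i ≤ j → j ≤ n → ℓ i 0 ≤ ℓ j 0)
    (a b j : ℕ) (hb : 1 ≤ b) (hba : b < a) (haj : a ≤ j) (hjn : j ≤ n) :
    (fRank n η ℓ (Finset.Icc b n) {j} : ℤ) - (ℓ (b - 1) 0 : ℤ)
      ≤ (fRank n η ℓ (Finset.Icc a n) {j} : ℤ) - (ℓ (a - 1) 0 : ℤ) := by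
  classical
  set La := ℓ (a - 1) 0 with hLa
  set Lb := ℓ (b - 1) 0 with hLb
  have han : a - 1 ≤ n := by omega
  have hLaη : La ≤ η := hbound (a - 1) han 0 (Nat.zero_le n)
  have hLba : Lb ≤ La := by
    rcases Nat.eq_zero_or_pos (b - 1) with h0 | h1
    · rw [hLb, h0, hds]; exact Nat.zero_le _
    · exact hmono (b - 1) (a - 1) h1 (by omega) han
  set k := La - Lb with hk
  have hrow : rowIdx n (Finset.Icc b n) {j} ⊆ rowIdx n (Finset.Icc a n) {j} := by
    intro x hx
    simp only [rowIdx, Finset.mem_insert, Finset.mem_sdiff, Finset.mem_Icc,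
      Finset.mem_singleton] at hx ⊢
    omega
  have hcol : colIdx (Finset.Icc b n) {j} ⊆ colIdx (Finset.Icc a n) {j} := by
    intro x hx
    simp only [colIdx, Finset.mem_insert, Finset.mem_inter, Finset.mem_Icc,
      Finset.mem_singleton] at hx ⊢
    omega
  set M : Matrix (↥(rowIdx n (Finset.Icc a n) {j}) × Fin η)
      (↥(colIdx (Finset.Icc a n) {j}) × Fin η) (ZMod 2) :=
    Matrix.of fun p q => Dblk η (ℓ (p.1 : ℕ) (q.1 : ℕ)) p.2 q.2 with hM
  set N : Matrix (↥(rowIdx n (Finset.Icc b n) {j}) × Fin η)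
      (↥(colIdx (Finset.Icc b n) {j}) × Fin η) (ZMod 2) :=
    Matrix.of fun p q => Dblk η (ℓ (p.1 : ℕ) (q.1 : ℕ)) p.2 q.2 with hN
  have h0col : (0 : ℕ) ∈ colIdx (Finset.Icc a n) {j} := Finset.mem_insert_self _ _
  have hrowa : (a - 1) ∈ rowIdx n (Finset.Icc a n) {j} := by
    simp only [rowIdx, Finset.mem_insert, Finset.mem_sdiff, Finset.mem_Icc,
      Finset.mem_singleton]
    omega
  have hvlt : ∀ t : Fin k, Lb + (t : ℕ) < η := by
    intro t; have := t.isLt; omega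
  set v : Fin k → (↥(colIdx (Finset.Icc a n) {j}) × Fin η) :=
    fun t => (⟨0, h0col⟩, ⟨Lb + t, hvlt t⟩) with hv
  have hmain : N.rank + k ≤ M.rank := by
    refine rank_ge_aux M N
      (fun p => (⟨p.1.1, hrow p.1.2⟩, p.2)) (fun q => (⟨q.1.1, hcol q.1.2⟩, q.2))
      (fun p q => rfl) k v ?_ ?_
    · -- hzero
      intro t p
      have hp := p.1.2
      simp only [rowIdx, Finset.mem_insert, Finset.mem_sdiff, Finset.mem_Icc,
        Finset.mem_singleton] at hp
      have hle : ℓ (p.1 : ℕ) 0 ≤ Lb := by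
        rcases hp with h0 | ⟨⟨⟨h1, h2⟩, h3⟩, h4⟩
        · rw [h0, hds]; exact Nat.zero_le _
        · exact hmono _ (b - 1) h1 (by omega) (by omega)
      show Dblk η (ℓ (p.1 : ℕ) 0) p.2 ⟨Lb + t, hvlt t⟩ = 0
      rw [Dblk, Matrix.of_apply, if_neg]
      rintro ⟨h1, -⟩
      simp only at h1
      omega
    · -- hind
      rw [Fintype.linearIndependent_iff]
      intro g hg t
      have hrt : Lb + (t : ℕ) + (η - La) < η := by have := t.isLt; omega
      have := congrFun hg (⟨(a - 1 : ℕ), hrowa⟩, ⟨Lb + t + (η - La), hrt⟩)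
      simp only [Finset.sum_apply, Pi.smul_apply, Matrix.transpose_apply,
        smul_eq_mul, Pi.zero_apply, hM, Matrix.of_apply, hv, Dblk] at this
      have key : ∀ t' : Fin k,
          (g t' * if (Lb + (t' : ℕ) < La ∧
              Lb + (t : ℕ) + (η - La) = Lb + (t' : ℕ) + (η - La)) then (1 : ZMod 2) else 0)
            = if t' = t then g t' else 0 := by
        intro t'
        have ht' := t'.isLt
        by_cases h : t' = t
        · subst h
          rw [if_pos ⟨by omega, rfl⟩, if_pos rfl, mul_one]
        · rw [if_neg, if_neg h, mul_zero]
          rintro ⟨-, h2⟩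
          exact h (Fin.ext (by omega))
      rw [Finset.sum_congr rfl (fun t' _ => key t')] at this
      rwa [Finset.sum_ite_eq' Finset.univ t g, if_pos (Finset.mem_univ t)] at this
  have hfa : fRank n η ℓ (Finset.Icc a n) {j} = M.rank := rfl
  have hfb : fRank n η ℓ (Finset.Icc b n) {j} = N.rank := rfl
  rw [hfa, hfb]
  omega
end

section
/- If there exists j ∈ [n] such that ℓ_{j,s} = ℓ_{j−1,s} = f([j:n],{j}), then det P = 0. -/
open Finset

section MyHelpers
open Matrix

lemma myrank_sub_left {m m' n : Type*} [Fintype m] [Fintype m'] [Fintype n] [DecidableEq m]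
    {K : Type*} [Field K] (A : Matrix m n K) (f : m' → m) :
    (A.submatrix f id).rank ≤ A.rank := by
  have h : A.submatrix f id = (Matrix.of fun i k => if f i = k then (1:K) else 0) * A := by
    ext i c
    simp [Matrix.mul_apply, ite_mul, Finset.sum_ite_eq]
  rw [h]
  exact Matrix.rank_mul_le_right _ _

lemma myrank_sub_right {m n n' : Type*} [Fintype m] [Fintype n] [Fintype n'] [DecidableEq n]
    {K : Type*} [Field K] (A : Matrix m n K) (g : n' → n) :
    (A.submatrix id g).rank ≤ A.rank := by
  have h : A.submatrix id g = A * (Matrix.of fun k q => if k = g q then (1:K) else 0) := by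
    ext i c
    simp [Matrix.mul_apply, mul_ite, Finset.sum_ite_eq']
  rw [h]
  exact Matrix.rank_mul_le_left _ _

lemma myrank_equiv {K : Type*} [Field K] {m m' n n' : Type*} [Fintype m] [Fintype m'] [Fintype n] [Fintype n']
    [DecidableEq m] [DecidableEq m'] [DecidableEq n] [DecidableEq n']
    (A : Matrix m n K) (e₁ : m' ≃ m) (e₂ : n' ≃ n) :
    (A.submatrix e₁ e₂).rank = A.rank := by
  refine le_antisymm ?_ ?_
  · have : A.submatrix e₁ e₂ = (A.submatrix e₁ id).submatrix id e₂ := rfl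
    rw [this]
    exact (myrank_sub_right _ _).trans (myrank_sub_left _ _)
  · have h : A = ((A.submatrix e₁ e₂).submatrix e₁.symm e₂.symm) := by
      ext i c; simp
    calc A.rank = (((A.submatrix e₁ e₂).submatrix (e₁.symm : m → m') id).submatrix id (e₂.symm : n → n')).rank := by
          rw [Matrix.submatrix_submatrix]
          simp only [Function.id_comp, Function.comp_id]
          rw [← h]
      _ ≤ ((A.submatrix e₁ e₂).submatrix (e₁.symm : m → m') id).rank := myrank_sub_right _ _
      _ ≤ (A.submatrix e₁ e₂).rank := myrank_sub_left _ _

lemma mycard {η c : ℕ} (hc : c ≤ η) : Fintype.card {q : Fin η // (q:ℕ) < c} = c := by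
  have e : {q : Fin η // (q:ℕ) < c} ≃ Fin c :=
    { toFun := fun x => ⟨x.1, x.2⟩
      invFun := fun y => ⟨⟨y.1, lt_of_lt_of_le y.2 hc⟩, y.2⟩
      left_inv := fun x => rfl
      right_inv := fun y => rfl }
  rw [Fintype.card_congr e, Fintype.card_fin]

lemma myrank_cols_zero {m : Type*} [Fintype m] {η : ℕ} (A : Matrix m (Fin η) (ZMod 2))
    {c : ℕ} (hc : c ≤ η) (h0 : ∀ (p : m) (q : Fin η), c ≤ (q:ℕ) → A p q = 0) : A.rank ≤ c := by
  set w : Fin η → ZMod 2 := fun q => if (q:ℕ) < c then 1 else 0 with hw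
  have hA : A = A * Matrix.diagonal w := by
    ext p q
    rw [Matrix.mul_diagonal]
    by_cases hq : (q:ℕ) < c
    · simp [hw, hq]
    · rw [h0 p q (le_of_not_gt hq)]; simp
  calc A.rank = (A * Matrix.diagonal w).rank := by rw [← hA]
    _ ≤ (Matrix.diagonal w).rank := Matrix.rank_mul_le_right _ _
    _ = Fintype.card {q // w q ≠ 0} := Matrix.rank_diagonal w
    _ = Fintype.card {q : Fin η // (q:ℕ) < c} := by
        apply Fintype.card_congr
        apply Equiv.subtypeEquivRight
        intro q
        by_cases hq : (q:ℕ) < c <;> simp [hw, hq]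
    _ = c := mycard hc

lemma rank_Dblk {η m : ℕ} (hm : m ≤ η) : (Dblk η m).rank = m := by
  refine le_antisymm (myrank_cols_zero _ hm fun p q hq => ?_) ?_
  · rw [Dblk, Matrix.of_apply, if_neg]
    rintro ⟨h1, -⟩; omega
  · set w : Fin η → ZMod 2 := fun q => if (q:ℕ) < m then 1 else 0 with hw
    have hDD : (Dblk η m)ᵀ * Dblk η m = Matrix.diagonal w := by
      ext c c'
      rw [Matrix.mul_apply]
      by_cases hcm : (c:ℕ) < m
      · by_cases hcc : c = c'
        · subst hcc
          have r0lt : (c:ℕ) + (η - m) < η := by omega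
          rw [Matrix.diagonal_apply_eq]
          rw [Finset.sum_eq_single (⟨(c:ℕ) + (η - m), r0lt⟩ : Fin η)]
          · simp [Dblk, hcm, hw]
          · intro r _ hr
            rw [Matrix.transpose_apply, Dblk, Matrix.of_apply]
            rw [if_neg, zero_mul]
            rintro ⟨-, h2⟩
            exact hr (Fin.ext h2)
          · intro h; exact absurd (Finset.mem_univ _) h
        · rw [Matrix.diagonal_apply_ne _ hcc]
          apply Finset.sum_eq_zero
          intro r _
          rw [Matrix.transpose_apply, Dblk, Matrix.of_apply, Matrix.of_apply]
          by_cases h1 : (c:ℕ) < m ∧ (r:ℕ) = (c:ℕ) + (η - m)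
          · rw [if_pos h1, if_neg, mul_zero]
            rintro ⟨h2, h3⟩
            exact hcc (Fin.ext (by omega))
          · rw [if_neg h1, zero_mul]
      · have hd0 : Matrix.diagonal w c c' = 0 := by
          by_cases hcc : c = c'
          · subst hcc; rw [Matrix.diagonal_apply_eq]; simp [hw, hcm]
          · rw [Matrix.diagonal_apply_ne _ hcc]
        rw [hd0]
        apply Finset.sum_eq_zero
        intro r _
        rw [Matrix.transpose_apply, Dblk, Matrix.of_apply, if_neg, zero_mul]
        rintro ⟨h1, -⟩
        exact hcm h1
    have h1 : (Matrix.diagonal w).rank = m := by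
      rw [Matrix.rank_diagonal]
      rw [Fintype.card_congr (Equiv.subtypeEquivRight (q := fun q : Fin η => (q:ℕ) < m) fun q => by
        by_cases hq : (q:ℕ) < m <;> simp [hw, hq])]
      exact mycard hm
    calc m = (Matrix.diagonal w).rank := h1.symm
      _ = ((Dblk η m)ᵀ * Dblk η m).rank := by rw [hDD]
      _ ≤ (Dblk η m).rank := Matrix.rank_mul_le_right _ _

/-- The matrix of the transfer matrix shape, abstractly. -/
noncomputable def FM (η : ℕ) (ℓ : ℕ → ℕ → ℕ) (R C : Finset ℕ) :
    Matrix (↥R × Fin η) (↥C × Fin η) (ZMod 2) :=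
  Matrix.of fun p q => Dblk η (ℓ (p.1:ℕ) (q.1:ℕ)) p.2 q.2

/-- A stacked column of `D` blocks. -/
noncomputable def SM (η : ℕ) {ι : Type*} (g : ι → ℕ) : Matrix (ι × Fin η) (Fin η) (ZMod 2) :=
  Matrix.of fun p q => Dblk η (g p.1) p.2 q

lemma fRank_eq (n η : ℕ) (ℓ : ℕ → ℕ → ℕ) (Ω S : Finset ℕ) :
    fRank n η ℓ Ω S = (FM η ℓ (rowIdx n Ω S) (colIdx Ω S)).rank := rfl

lemma rank_SM {η : ℕ} {ι : Type*} [Fintype ι] [DecidableEq ι] (g : ι → ℕ) {c : ℕ}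
    (hc : c ≤ η) (hbd : ∀ k, g k ≤ c) (k0 : ι) (hk0 : g k0 = c) :
    (SM η g).rank = c := by
  refine le_antisymm (myrank_cols_zero _ hc fun p q hq => ?_) ?_
  · rw [SM, Matrix.of_apply, Dblk, Matrix.of_apply, if_neg]
    rintro ⟨h1, -⟩
    exact absurd (lt_of_lt_of_le h1 (hbd p.1)) (not_lt.2 hq)
  · have hsub : (SM η g).submatrix (fun r : Fin η => ((k0, r) : ι × Fin η)) id = Dblk η c := by
      ext r q
      simp [SM, hk0]
    calc c = (Dblk η c).rank := (rank_Dblk hc).symm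
      _ = ((SM η g).submatrix (fun r : Fin η => ((k0, r) : ι × Fin η)) id).rank := by
          rw [hsub]
      _ ≤ (SM η g).rank := myrank_sub_left _ _

lemma fRank_pure (n η : ℕ) (ℓ : ℕ → ℕ → ℕ) (Ω S : Finset ℕ) (hd : Ω ∩ S = ∅)
    {c : ℕ} (hc : c ≤ η) (hbd : ∀ k ∈ rowIdx n Ω S, ℓ k 0 ≤ c)
    (k0 : ℕ) (hk0 : k0 ∈ rowIdx n Ω S) (hv : ℓ k0 0 = c) : fRank n η ℓ Ω S = c := by
  have hcol : colIdx Ω S = {0} := by rw [colIdx, hd]; rfl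
  have hq0 : ∀ q : ↥(colIdx Ω S), (q : ℕ) = 0 := by
    rintro ⟨q, hq⟩
    rw [hcol, Finset.mem_singleton] at hq
    exact hq
  have h0mem : (0:ℕ) ∈ colIdx Ω S := by rw [hcol]; exact Finset.mem_singleton_self 0
  let e₂ : ↥(colIdx Ω S) × Fin η ≃ Fin η :=
    { toFun := fun x => x.2
      invFun := fun q => (⟨0, h0mem⟩, q)
      left_inv := fun x => by
        obtain ⟨⟨a, ha⟩, q⟩ := x
        obtain rfl : a = 0 := hq0 ⟨a, ha⟩
        rfl
      right_inv := fun q => rfl }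
  have hM : FM η ℓ (rowIdx n Ω S) (colIdx Ω S) =
      (SM η (fun k : ↥(rowIdx n Ω S) => ℓ (k:ℕ) 0)).submatrix (Equiv.refl _) e₂ := by
    ext p q
    show Dblk η (ℓ (p.1:ℕ) (q.1:ℕ)) p.2 q.2 = Dblk η (ℓ (p.1:ℕ) 0) p.2 q.2
    rw [hq0 q.1]
  rw [fRank_eq, hM, myrank_equiv]
  exact rank_SM _ hc (fun k => hbd k.1 k.2) ⟨k0, hk0⟩ hv

lemma span_cols_row_sub {K : Type*} [Field K] {m m' nn : Type*} (f : m' → m) (B : Matrix m nn K) :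
    Submodule.span K (Set.range (B.submatrix f id)ᵀ) =
      Submodule.map (LinearMap.funLeft K K f) (Submodule.span K (Set.range Bᵀ)) := by
  rw [← Submodule.span_image]
  congr 1
  exact (Set.range_comp (⇑(LinearMap.funLeft K K f)) (fun i => Bᵀ i))

lemma rank_row_sub_eq_of_col_span {K : Type*} [Field K]
    {m m' n ns : Type*} [Fintype m] [Fintype m'] [Fintype n] [Fintype ns]
    (A : Matrix m n K) (g : ns → n) (f : m' → m)
    (h : (A.submatrix id g).rank = A.rank) :
    (A.submatrix f id).rank = ((A.submatrix id g).submatrix f id).rank := by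
  have hsub : Submodule.span K (Set.range (A.submatrix id g)ᵀ) ≤
      Submodule.span K (Set.range Aᵀ) := by
    apply Submodule.span_mono
    have h2 : (A.submatrix id g)ᵀ = Aᵀ ∘ g := rfl
    rw [h2]
    exact Set.range_comp_subset_range g Aᵀ
  have hEq : Submodule.span K (Set.range (A.submatrix id g)ᵀ) =
      Submodule.span K (Set.range Aᵀ) := by
    apply Submodule.eq_of_le_of_finrank_le hsub
    show Module.finrank K (Submodule.span K (Set.range A.col)) ≤
      Module.finrank K (Submodule.span K (Set.range (A.submatrix id g).col))
    rw [← Matrix.rank_eq_finrank_span_cols, ← Matrix.rank_eq_finrank_span_cols, h]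
  have hm1 := span_cols_row_sub f A
  have hm2 := span_cols_row_sub f (A.submatrix id g)
  rw [Matrix.rank_eq_finrank_span_cols, Matrix.rank_eq_finrank_span_cols]
  change Module.finrank K (Submodule.span K (Set.range (A.submatrix f id)ᵀ)) =
    Module.finrank K (Submodule.span K (Set.range ((A.submatrix id g).submatrix f id)ᵀ))
  rw [hm1, hm2, hEq]

lemma rank_FM_congr (η : ℕ) (ℓ : ℕ → ℕ → ℕ) {R R' C C' : Finset ℕ}
    (hR : R = R') (hC : C = C') : (FM η ℓ R C).rank = (FM η ℓ R' C').rank := by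
  subst hR; subst hC; rfl

lemma aux_le {η : ℕ} (ℓ : ℕ → ℕ → ℕ) (RI RJ C C0 : Finset ℕ)
    (hsub : ∀ a ∈ RI, a ∈ RJ)
    (h0C : (0:ℕ) ∈ C) (hC0 : ∀ a ∈ C0, a = 0) (h0C0 : (0:ℕ) ∈ C0)
    {L : ℕ} (hLη : L ≤ η)
    (hbd : ∀ k ∈ RJ, ℓ k 0 ≤ L) (k0 : ℕ) (hk0 : k0 ∈ RJ) (hv : ℓ k0 0 = L)
    (hA : (FM η ℓ RJ C).rank = L) :
    (FM η ℓ RI C).rank = (FM η ℓ RI C0).rank := by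
  classical
  let gfun : Fin η → ↥C × Fin η := fun q => (⟨0, h0C⟩, q)
  let ffun : ↥RI × Fin η → ↥RJ × Fin η := fun p => (⟨p.1.1, hsub _ p.1.2⟩, p.2)
  have hsg : ((FM η ℓ RJ C).submatrix id gfun).rank = L := by
    have hrfl : (FM η ℓ RJ C).submatrix id gfun = SM η (fun k : ↥RJ => ℓ (k:ℕ) 0) := rfl
    rw [hrfl]
    exact rank_SM _ hLη (fun k => hbd k.1 k.2) ⟨k0, hk0⟩ hv
  have hmain := rank_row_sub_eq_of_col_span (FM η ℓ RJ C) gfun ffun (by rw [hsg, hA])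
  let e0 : ↥C0 × Fin η ≃ Fin η :=
    { toFun := fun x => x.2
      invFun := fun q => (⟨0, h0C0⟩, q)
      left_inv := fun x => by
        obtain ⟨⟨a, ha⟩, q⟩ := x
        obtain rfl : a = 0 := hC0 a ha
        rfl
      right_inv := fun q => rfl }
  have h1 : FM η ℓ RI C = (FM η ℓ RJ C).submatrix ffun id := rfl
  have h3 : FM η ℓ RI C0 = (((FM η ℓ RJ C).submatrix id gfun).submatrix ffun id).submatrix
      (Equiv.refl (↥RI × Fin η)) e0 := by
    ext p q
    show Dblk η (ℓ (p.1:ℕ) (q.1:ℕ)) p.2 q.2 = Dblk η (ℓ (p.1:ℕ) 0) p.2 q.2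
    rw [hC0 _ q.1.2]
  calc (FM η ℓ RI C).rank = ((FM η ℓ RJ C).submatrix ffun id).rank := by rw [h1]
    _ = (((FM η ℓ RJ C).submatrix id gfun).submatrix ffun id).rank := hmain
    _ = (FM η ℓ RI C0).rank := by rw [h3, myrank_equiv]

end MyHelpers

lemma key_cols (n η : ℕ) (ℓ : ℕ → ℕ → ℕ)
    (hbound : ∀ i ≤ n, ∀ j ≤ n, ℓ i j ≤ η)
    (hds : ℓ 0 0 = 0)
    (hmono : ∀ i j, 1 ≤ i → i ≤ j → j ≤ n → ℓ i 0 ≤ ℓ j 0)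
    (j : ℕ) (hj1 : 1 ≤ j) (hjn : j ≤ n)
    (h1 : ℓ j 0 = ℓ (j - 1) 0)
    (h2 : ℓ (j - 1) 0 = fRank n η ℓ (Finset.Icc j n) {j})
    (i : ℕ) (hi1 : 1 ≤ i) (hi2 : i ≤ n + 1) :
    fRank n η ℓ (Finset.Icc i n) {j} = fRank n η ℓ (Finset.Icc i n) ∅ := by
  have hieta : ℓ (i-1) 0 ≤ η := hbound (i-1) (by omega) 0 (by omega)
  by_cases hij : j < i
  · -- `j` is not a transmitting state column; both matrices are stacked `D`s.
    have hde : Finset.Icc i n ∩ (∅ : Finset ℕ) = ∅ := Finset.inter_empty _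
    have hdj : Finset.Icc i n ∩ {j} = ∅ := by
      ext a
      simp only [Finset.mem_inter, Finset.mem_Icc, Finset.mem_singleton,
        Finset.notMem_empty, iff_false, not_and]
      omega
    have hbd1 : ∀ k ∈ rowIdx n (Finset.Icc i n) {j}, ℓ k 0 ≤ ℓ (i-1) 0 := by
      intro k hk
      simp only [rowIdx, Finset.mem_insert, Finset.mem_sdiff, Finset.mem_Icc,
        Finset.mem_singleton] at hk
      rcases hk with rfl | ⟨⟨⟨hk1, hk2⟩, hk3⟩, hk4⟩
      · rw [hds]; exact Nat.zero_le _
      · exact hmono k (i-1) hk1 (by omega) (by omega)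
    have hbd0 : ∀ k ∈ rowIdx n (Finset.Icc i n) ∅, ℓ k 0 ≤ ℓ (i-1) 0 := by
      intro k hk
      simp only [rowIdx, Finset.sdiff_empty, Finset.mem_insert, Finset.mem_sdiff,
        Finset.mem_Icc] at hk
      rcases hk with rfl | ⟨⟨hk1, hk2⟩, hk3⟩
      · rw [hds]; exact Nat.zero_le _
      · exact hmono k (i-1) hk1 (by omega) (by omega)
    have hmem0 : i - 1 ∈ rowIdx n (Finset.Icc i n) ∅ := by
      simp only [rowIdx, Finset.sdiff_empty, Finset.mem_insert, Finset.mem_sdiff,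
        Finset.mem_Icc]
      omega
    rw [fRank_pure n η ℓ _ _ hde hieta hbd0 (i-1) hmem0 rfl]
    by_cases hji : i - 1 = j
    · have hmem1 : j - 1 ∈ rowIdx n (Finset.Icc i n) {j} := by
        simp only [rowIdx, Finset.mem_insert, Finset.mem_sdiff, Finset.mem_Icc,
          Finset.mem_singleton]
        omega
      have hval1 : ℓ (j-1) 0 = ℓ (i-1) 0 := by rw [hji, ← h1]
      exact fRank_pure n η ℓ _ _ hdj hieta hbd1 (j-1) hmem1 hval1
    · have hmem1 : i - 1 ∈ rowIdx n (Finset.Icc i n) {j} := by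
        simp only [rowIdx, Finset.mem_insert, Finset.mem_sdiff, Finset.mem_Icc,
          Finset.mem_singleton]
        omega
      exact fRank_pure n η ℓ _ _ hdj hieta hbd1 (i-1) hmem1 rfl
  · -- `i ≤ j`: the span argument.
    push_neg at hij
    have hLη : ℓ (j-1) 0 ≤ η := hbound (j-1) (by omega) 0 (by omega)
    rw [fRank_eq, fRank_eq]
    have hcolI : colIdx (Finset.Icc i n) {j} = colIdx (Finset.Icc j n) {j} := by
      ext a
      simp only [colIdx, Finset.mem_insert, Finset.mem_inter, Finset.mem_Icc,
        Finset.mem_singleton]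
      omega
    have hrow0 : rowIdx n (Finset.Icc i n) ∅ = rowIdx n (Finset.Icc i n) {j} := by
      ext a
      simp only [rowIdx, Finset.sdiff_empty, Finset.mem_insert, Finset.mem_sdiff,
        Finset.mem_Icc, Finset.mem_singleton]
      omega
    rw [rank_FM_congr η ℓ (rfl : rowIdx n (Finset.Icc i n) {j} = rowIdx n (Finset.Icc i n) {j})
      hcolI, rank_FM_congr η ℓ hrow0 (rfl : colIdx (Finset.Icc i n) ∅ = colIdx (Finset.Icc i n) ∅)]
    apply aux_le ℓ (rowIdx n (Finset.Icc i n) {j}) (rowIdx n (Finset.Icc j n) {j})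
      (colIdx (Finset.Icc j n) {j}) (colIdx (Finset.Icc i n) ∅)
      ?hsub ?h0C ?hC0 ?h0C0 hLη ?hbd (j-1) ?hk0 rfl ?hA
    case hsub =>
      intro a ha
      simp only [rowIdx, Finset.mem_insert, Finset.mem_sdiff, Finset.mem_Icc,
        Finset.mem_singleton] at ha ⊢
      omega
    case h0C =>
      simp [colIdx]
    case hC0 =>
      intro a ha
      simp only [colIdx, Finset.inter_empty, Finset.mem_insert, Finset.notMem_empty,
        or_false] at ha
      exact ha
    case h0C0 =>
      simp [colIdx]
    case hbd =>
      intro k hk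
      simp only [rowIdx, Finset.mem_insert, Finset.mem_sdiff, Finset.mem_Icc,
        Finset.mem_singleton] at hk
      rcases hk with rfl | ⟨⟨⟨hk1, hk2⟩, hk3⟩, hk4⟩
      · rw [hds]; exact Nat.zero_le _
      · exact hmono k (j-1) hk1 (by omega) (by omega)
    case hk0 =>
      simp only [rowIdx, Finset.mem_insert, Finset.mem_sdiff, Finset.mem_Icc,
        Finset.mem_singleton]
      omega
    case hA =>
      rw [← fRank_eq]
      exact h2.symm

theorem stmt9 (n η : ℕ) (hn : 1 ≤ n) (hη : 1 ≤ η) (ℓ : ℕ → ℕ → ℕ)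
    (hbound : ∀ i ≤ n, ∀ j ≤ n, ℓ i j ≤ η)
    (hds : ℓ 0 0 = 0) (hii : ∀ i, 1 ≤ i → i ≤ n → ℓ i i = 0)
    (hmono : ∀ i j, 1 ≤ i → i ≤ j → j ≤ n → ℓ i 0 ≤ ℓ j 0)
    (j : ℕ) (hj1 : 1 ≤ j) (hjn : j ≤ n)
    (h1 : ℓ j 0 = ℓ (j - 1) 0)
    (h2 : ℓ (j - 1) 0 = fRank n η ℓ (Finset.Icc j n) {j}) :
    (Pmat n η ℓ).det = 0 := by
  have key := key_cols n η ℓ hbound hds hmono j hj1 hjn h1 h2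
  rw [← Matrix.det_transpose]
  apply Matrix.det_zero_of_row_eq
    (i := (⟨j, by omega⟩ : Fin (n+2))) (j := (⟨n+1, by omega⟩ : Fin (n+2)))
  · intro hEq
    rw [Fin.mk.injEq] at hEq
    omega
  · funext k
    show Pmat n η ℓ k ⟨j, by omega⟩ = Pmat n η ℓ k ⟨n+1, by omega⟩
    have hvj : ((⟨j, by omega⟩ : Fin (n+2)) : ℕ) = j := rfl
    have hvn : ((⟨n+1, by omega⟩ : Fin (n+2)) : ℕ) = n+1 := rfl
    have hj0 : ¬(j = 0) := by omega
    have hjn1 : ¬(j = n+1) := by omega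
    have hklt : (k:ℕ) < n + 2 := k.isLt
    by_cases hk : (k:ℕ) = 0
    · simp [Pmat, hvj, hvn, hk, hj0, (Fin.ext hk : k = 0)]
    · simp [Pmat, hvj, hvn, hk, hj0, hjn1, key (k:ℕ) (by omega) (by omega)]
end

section
/- Let k ≥ 1 and integers 1 ≤ a_1 ≤ b_1 < a_2 ≤ b_2 < … < a_k ≤ b_k ≤ n, set a_{k+1} := n+1, and let Ω = ∪_{i=1}^{k} [a_i:b_i]. Then g(Ω) ≥ ∑_{i=1}^{k+1} g([a_i:n]) − ∑_{i=1}^{k} g([b_i+1:n]) (where [a:b] = {a,…,b}, empty when a > b). -/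
open Finset

theorem stmt18 (n : ℕ) (hn : 1 ≤ n) (g : Finset ℕ → ℝ)
    (hsub : ∀ A ⊆ Finset.Icc 1 n, ∀ B ⊆ Finset.Icc 1 n,
      g (A ∪ B) + g (A ∩ B) ≤ g A + g B)
    (k : ℕ) (hk : 1 ≤ k) (a b : ℕ → ℕ)
    (ha1 : 1 ≤ a 1)
    (hab : ∀ i, 1 ≤ i → i ≤ k → a i ≤ b i)
    (hba : ∀ i, 1 ≤ i → i < k → b i < a (i + 1))
    (hbk : b k ≤ n) (hak1 : a (k + 1) = n + 1) :
    (∑ i ∈ Finset.Icc 1 (k + 1), g (Finset.Icc (a i) n))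
        - ∑ i ∈ Finset.Icc 1 k, g (Finset.Icc (b i + 1) n)
      ≤ g ((Finset.Icc 1 k).biUnion fun i => Finset.Icc (a i) (b i)) := by
  set Ω : ℕ → Finset ℕ := fun j => (Finset.Icc 1 j).biUnion fun i => Finset.Icc (a i) (b i)
    with hΩ
  have hbm : ∀ i j, 1 ≤ i → i ≤ j → j ≤ k → b i ≤ b j := by
    intro i j hi hij hjk
    induction j with
    | zero => omega
    | succ m ih =>
      by_cases h : i = m + 1
      · subst h; exact le_rfl
      · have hm : 1 ≤ m := by omega
        have h1 : b i ≤ b m := ih (by omega) (by omega)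
        have h2 : b m < a (m + 1) := hba m hm (by omega)
        have h3 : a (m + 1) ≤ b (m + 1) := hab (m + 1) (by omega) hjk
        omega
  have ham : ∀ i, 1 ≤ i → i ≤ k + 1 → 1 ≤ a i := by
    intro i hi hik
    induction i with
    | zero => omega
    | succ m ih =>
      by_cases h0 : m = 0
      · subst h0; exact ha1
      · by_cases hmk : m = k
        · subst hmk; rw [hak1]; omega
        · have h1 : 1 ≤ a m := ih (by omega) (by omega)
          have h2 : a m ≤ b m := hab m (by omega) (by omega)
          have h3 : b m < a (m + 1) := hba m (by omega) (by omega)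
          omega
  have hbn : ∀ i, 1 ≤ i → i ≤ k → b i ≤ n :=
    fun i hi hik => le_trans (hbm i k hi hik le_rfl) hbk
  have hba' : ∀ m, 1 ≤ m → m ≤ k → b m + 1 ≤ a (m + 1) := by
    intro m hm hmk
    by_cases h : m = k
    · subst h; rw [hak1]; omega
    · have := hba m hm (by omega); omega
  have hΩmem : ∀ j x, x ∈ Ω j ↔ ∃ i, 1 ≤ i ∧ i ≤ j ∧ a i ≤ x ∧ x ≤ b i := by
    intro j x
    simp only [hΩ, Finset.mem_biUnion, Finset.mem_Icc]
    constructor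
    · rintro ⟨i, ⟨h1, h2⟩, h3, h4⟩; exact ⟨i, h1, h2, h3, h4⟩
    · rintro ⟨i, h1, h2, h3, h4⟩; exact ⟨i, ⟨h1, h2⟩, h3, h4⟩
  have hΩsub : ∀ j, j ≤ k → Ω j ⊆ Finset.Icc 1 n := by
    intro j hj x hx
    rw [hΩmem] at hx
    obtain ⟨i, h1, h2, h3, h4⟩ := hx
    have := ham i h1 (by omega)
    have := hbn i h1 (by omega)
    rw [Finset.mem_Icc]
    omega
  have main : ∀ j, j ≤ k →
      (∑ i ∈ Finset.Icc 1 (j + 1), g (Finset.Icc (a i) n))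
          - ∑ i ∈ Finset.Icc 1 j, g (Finset.Icc (b i + 1) n)
        ≤ g (Ω j ∪ Finset.Icc (a (j + 1)) n) := by
    intro j
    induction j with
    | zero =>
      intro _
      have h0 : Ω 0 = ∅ := by
        rw [hΩ]; simp
      rw [h0, Finset.empty_union]
      simp
    | succ m ih =>
      intro hmk
      have hm1 : 1 ≤ m + 1 := by omega
      have hbm1 : a (m + 1) ≤ b (m + 1) := hab (m + 1) hm1 hmk
      have hbn1 : b (m + 1) ≤ n := hbn (m + 1) hm1 hmk
      have hba1 : b (m + 1) + 1 ≤ a (m + 2) := hba' (m + 1) hm1 hmk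
      have hU : (Ω (m + 1) ∪ Finset.Icc (a (m + 2)) n) ∪ Finset.Icc (b (m + 1) + 1) n
          = Ω m ∪ Finset.Icc (a (m + 1)) n := by
        ext x
        simp only [Finset.mem_union, hΩmem, Finset.mem_Icc]
        constructor
        · rintro ((⟨i, h1, h2, h3, h4⟩ | h) | h)
          · by_cases hi : i ≤ m
            · exact Or.inl ⟨i, h1, hi, h3, h4⟩
            · have : i = m + 1 := by omega
              subst this
              exact Or.inr ⟨h3, by omega⟩
          · exact Or.inr ⟨by omega, h.2⟩
          · exact Or.inr ⟨by omega, h.2⟩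
        · rintro (⟨i, h1, h2, h3, h4⟩ | h)
          · exact Or.inl (Or.inl ⟨i, h1, by omega, h3, h4⟩)
          · by_cases hx : x ≤ b (m + 1)
            · exact Or.inl (Or.inl ⟨m + 1, hm1, le_rfl, h.1, hx⟩)
            · exact Or.inr ⟨by omega, h.2⟩
      have hI : (Ω (m + 1) ∪ Finset.Icc (a (m + 2)) n) ∩ Finset.Icc (b (m + 1) + 1) n
          = Finset.Icc (a (m + 2)) n := by
        ext x
        simp only [Finset.mem_inter, Finset.mem_union, hΩmem, Finset.mem_Icc]
        constructor
        · rintro ⟨(⟨i, h1, h2, h3, h4⟩ | h), hB⟩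
          · have : b i ≤ b (m + 1) := hbm i (m + 1) h1 h2 hmk
            omega
          · exact h
        · intro h
          exact ⟨Or.inr h, by omega, h.2⟩
      have hAs : Ω (m + 1) ∪ Finset.Icc (a (m + 2)) n ⊆ Finset.Icc 1 n := by
        intro x hx
        rcases Finset.mem_union.mp hx with h | h
        · exact hΩsub (m + 1) hmk h
        · rw [Finset.mem_Icc] at h ⊢
          have := ham (m + 2) (by omega) (by omega)
          omega
      have hBs : Finset.Icc (b (m + 1) + 1) n ⊆ Finset.Icc 1 n := by
        intro x hx
        rw [Finset.mem_Icc] at hx ⊢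
        omega
      have hsubm := hsub _ hAs _ hBs
      rw [hU, hI] at hsubm
      have hih := ih (by omega)
      rw [Finset.sum_Icc_succ_top (show 1 ≤ m + 2 by omega),
        Finset.sum_Icc_succ_top (show 1 ≤ m + 1 by omega)
          (f := fun i => g (Finset.Icc (b i + 1) n))]
      linarith
  have hfin := main k le_rfl
  rw [hak1] at hfin
  have : Finset.Icc (n + 1) n = ∅ := Finset.Icc_eq_empty (by omega)
  rw [this, Finset.union_empty] at hfin
  exact hfin
end
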